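/- For all real x with 0 < x < 2, 4(arcsin(x/2))^2 / √(4−x^2) = ∑_{k=1}^∞ (x/2)^{2k} · (1/2)_k / (1)_k · (4 H_{2k}^{(2)} − H_k^{(2)}). -/

import Mathlib

open Real

noncomputable def poch (x : ℝ) (k : ℕ) : ℝ := ∏ i ∈ Finset.range k, (x + i)

noncomputable def H2 (n : ℕ) : ℝ := ∑ j ∈ Finset.range n, 1 / ((j : ℝ) + 1) ^ 2

namespace Stmt5Aux

noncomputable def p (k : ℕ) : ℝ := poch (1/2) k / poch 1 k
noncomputable def tt (k : ℕ) : ℝ := 4 * H2 (2 * k) - H2 k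
noncomputable def a (k : ℕ) : ℝ := p k * tt k
noncomputable def c (k : ℕ) : ℝ := p k / (2 * k + 1)

lemma poch_succ (x : ℝ) (k : ℕ) : poch x (k + 1) = poch x k * (x + k) :=
  Finset.prod_range_succ _ _

lemma poch_pos {x : ℝ} (hx : 0 < x) (k : ℕ) : 0 < poch x k := by
  induction k with
  | zero => simp [poch]
  | succ n ih => rw [poch_succ]; positivity

lemma p_pos (k : ℕ) : 0 < p k := div_pos (poch_pos (by norm_num) k) (poch_pos one_pos k)

lemma p_zero : p 0 = 1 := by simp [p, poch]

lemma p_succ (k : ℕ) : p (k + 1) = p k * ((2 * k + 1) / (2 * k + 2)) := by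
  have h1 : poch 1 k ≠ 0 := (poch_pos one_pos k).ne'
  have h2 : (1 : ℝ) + k ≠ 0 := by positivity
  unfold p
  rw [poch_succ, poch_succ]
  field_simp
  ring

lemma p_le_one (k : ℕ) : p k ≤ 1 := by
  induction k with
  | zero => rw [p_zero]
  | succ n ih =>
      rw [p_succ]
      have h1 : (2 * (n:ℝ) + 1) / (2 * n + 2) ≤ 1 := by
        rw [div_le_one (by positivity)]; linarith
      calc p n * ((2 * (n:ℝ) + 1) / (2 * n + 2)) ≤ 1 * 1 :=
            mul_le_mul ih h1 (by positivity) one_pos.le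
        _ = 1 := by ring

lemma R1 (k : ℕ) : (2 * (k:ℝ) + 2) * p (k + 1) = (2 * k + 1) * p k := by
  rw [p_succ]
  have : (2 * (k:ℝ) + 2) ≠ 0 := by positivity
  field_simp

lemma H2_succ (n : ℕ) : H2 (n + 1) = H2 n + 1 / ((n : ℝ) + 1) ^ 2 := by
  simp [H2, Finset.sum_range_succ]

lemma H2_nonneg (n : ℕ) : 0 ≤ H2 n := by
  apply Finset.sum_nonneg; intro i _; positivity

lemma H2_le_aux (n : ℕ) : H2 (n + 1) ≤ 2 - 1 / ((n:ℝ) + 1) := by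
  induction n with
  | zero => norm_num [H2]
  | succ n ih =>
      rw [H2_succ]
      have h1 : (0:ℝ) < (n:ℝ) + 1 := by positivity
      have h2 : (0:ℝ) < (n:ℝ) + 2 := by positivity
      have key : 1 / ((n:ℝ) + 1 + 1) ^ 2 ≤ 1 / ((n:ℝ)+1) - 1 / ((n:ℝ)+2) := by
        rw [div_sub_div _ _ h1.ne' h2.ne', div_le_div_iff₀ (by positivity) (by positivity)]
        nlinarith [sq_nonneg ((n:ℝ)+1)]
      push_cast
      push_cast at ih
      have e2 : ((n:ℝ)+1+1) = ((n:ℝ)+2) := by ring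
      rw [e2] at key ⊢
      linarith

lemma H2_le_two (n : ℕ) : H2 n ≤ 2 := by
  cases n with
  | zero => simp [H2]
  | succ n =>
      have h := H2_le_aux n
      have : (0:ℝ) < 1 / ((n:ℝ) + 1) := by positivity
      linarith

lemma H2_mono {n m : ℕ} (h : n ≤ m) : H2 n ≤ H2 m := by
  unfold H2
  apply Finset.sum_le_sum_of_subset_of_nonneg (Finset.range_subset_range.2 h)
  intro i _ _; positivity

lemma tt_nonneg (k : ℕ) : 0 ≤ tt k := by
  have h1 : H2 k ≤ H2 (2 * k) := H2_mono (by omega)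
  have h2 := H2_nonneg (2 * k)
  unfold tt; linarith

lemma tt_le (k : ℕ) : tt k ≤ 8 := by
  have h1 := H2_le_two (2 * k)
  have h2 := H2_nonneg k
  unfold tt
  linarith

lemma a_abs (k : ℕ) : |a k| ≤ 8 := by
  have h0 : 0 ≤ a k := mul_nonneg (p_pos k).le (tt_nonneg k)
  rw [abs_of_nonneg h0]
  calc a k = p k * tt k := rfl
    _ ≤ 1 * 8 := mul_le_mul (p_le_one k) (tt_le k) (tt_nonneg k) one_pos.le
    _ = 8 := by ring

lemma tt_succ (k : ℕ) : tt (k + 1) = tt k + 4 / (2 * (k:ℝ) + 1) ^ 2 := by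
  have e1 : 2 * (k + 1) = (2 * k + 1) + 1 := by omega
  rw [tt, e1, H2_succ, H2_succ, H2_succ, tt]
  push_cast
  have h1 : (2*(k:ℝ) + 1) ≠ 0 := by positivity
  have h2 : (2*(k:ℝ) + 2) ≠ 0 := by positivity
  have h3 : ((k:ℝ) + 1) ≠ 0 := by positivity
  field_simp
  ring

lemma R2 (k : ℕ) : (2 * (k:ℝ) + 2) * a (k + 1) = (2 * k + 1) * a k + 4 * c k := by
  have h1 : (2*(k:ℝ) + 1) ≠ 0 := by positivity
  calc (2 * (k:ℝ) + 2) * a (k + 1) = ((2 * (k:ℝ) + 2) * p (k+1)) * tt (k+1) := by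
        rw [a]; ring
    _ = ((2 * (k:ℝ) + 1) * p k) * (tt k + 4 / (2 * (k:ℝ) + 1) ^ 2) := by
        rw [R1, tt_succ]
    _ = (2 * k + 1) * a k + 4 * (p k / (2 * k + 1)) := by
        rw [a]; field_simp
    _ = (2 * k + 1) * a k + 4 * c k := by rw [c]

lemma c_abs (k : ℕ) : |c k| ≤ 1 := by
  have h1 : (0:ℝ) < 2 * k + 1 := by positivity
  have h0 : 0 ≤ c k := div_nonneg (p_pos k).le h1.le
  rw [abs_of_nonneg h0, c, div_le_one h1]
  calc p k ≤ 1 := p_le_one k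
    _ ≤ 2 * k + 1 := by push_cast; linarith [Nat.cast_nonneg (α := ℝ) k]

end Stmt5Aux
namespace Stmt5Aux

lemma summable_geom_lin {r : ℝ} (h0 : 0 ≤ r) (h1 : r < 1) :
    Summable (fun k : ℕ => (2 * (k:ℝ) + 1) * r ^ k) := by
  have hs1 : Summable (fun k : ℕ => (k:ℝ) ^ 1 * r ^ k) :=
    summable_pow_mul_geometric_of_norm_lt_one 1 (by rwa [Real.norm_eq_abs, abs_of_nonneg h0])
  have hs2 : Summable (fun k : ℕ => r ^ k) := summable_geometric_of_lt_one h0 h1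
  exact ((hs1.mul_left 2).add hs2).congr (fun k => by push_cast; ring)

lemma summable_main {q : ℕ → ℝ} {C : ℝ} (hq : ∀ k, |q k| ≤ C * (2 * (k:ℝ) + 1))
    {e : ℕ → ℕ} (he : ∀ k, k ≤ e k) {y : ℝ} (hy : |y| < 1) :
    Summable (fun k => q k * y ^ e k) := by
  have hg : Summable (fun k : ℕ => C * (2*(k:ℝ)+1) * |y| ^ k) :=
    ((summable_geom_lin (abs_nonneg y) hy).mul_left C).congr (fun k => by ring)
  refine Summable.of_norm_bounded hg ?_
  · intro k
    rw [norm_mul, norm_pow, Real.norm_eq_abs, Real.norm_eq_abs]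
    have h1 : |y| ^ e k ≤ |y| ^ k := pow_le_pow_of_le_one (abs_nonneg y) hy.le (he k)
    have h2 := hq k
    have h3 : (0:ℝ) ≤ C * (2*(k:ℝ)+1) := le_trans (abs_nonneg _) h2
    calc |q k| * |y| ^ e k ≤ (C * (2*(k:ℝ)+1)) * |y| ^ k :=
          mul_le_mul h2 h1 (by positivity) h3
      _ = C * (2*(k:ℝ)+1) * |y| ^ k := rfl

lemma hasDerivAt_main {q : ℕ → ℝ} {C : ℝ} (hq : ∀ k, |q k| ≤ C)
    {e : ℕ → ℕ} (he1 : ∀ k, k ≤ e k) (he2 : ∀ k, e k ≤ 2 * k + 1) {y : ℝ} (hy : |y| < 1) :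
    HasDerivAt (fun z => ∑' k, q k * z ^ e k)
      (∑' k, q k * ((e k : ℝ) * y ^ (e k - 1))) y := by
  have hC : 0 ≤ C := le_trans (abs_nonneg _) (hq 0)
  have hy0 := abs_nonneg y
  set r : ℝ := (|y| + 1) / 2 with hr
  have hr0 : 0 < r := by positivity
  have hyr : |y| < r := by rw [hr]; linarith
  have hr1 : r < 1 := by rw [hr]; linarith
  have hu : Summable (fun k : ℕ => (C / r) * ((2*(k:ℝ)+1) * r ^ k)) :=
    (summable_geom_lin hr0.le hr1).mul_left _
  have key : ∀ k : ℕ, r ^ (e k - 1) * r ≤ r ^ k := by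
    intro k
    rcases Nat.eq_zero_or_pos (e k) with h | h
    · have hk0 : k = 0 := Nat.le_antisymm (h ▸ he1 k) (Nat.zero_le k)
      subst hk0
      simp only [h, Nat.zero_sub, pow_zero, one_mul]
      linarith
    · have : e k - 1 + 1 = e k := Nat.succ_pred_eq_of_pos h
      rw [← pow_succ, this]
      exact pow_le_pow_of_le_one hr0.le hr1.le (he1 k)
  have hbound : ∀ (k : ℕ) (z : ℝ), z ∈ Metric.ball (0:ℝ) r →
      ‖q k * ((e k : ℝ) * z ^ (e k - 1))‖ ≤ (C / r) * ((2*(k:ℝ)+1) * r ^ k) := by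
    intro k z hz
    rw [mem_ball_zero_iff, Real.norm_eq_abs] at hz
    simp only [norm_mul, norm_pow, Real.norm_eq_abs, Nat.abs_cast]
    have h1 : |z| ^ (e k - 1) ≤ r ^ (e k - 1) :=
      pow_le_pow_left₀ (abs_nonneg z) hz.le _
    have h2 : ((e k : ℝ)) ≤ 2*(k:ℝ)+1 := by
      have := he2 k; push_cast; exact_mod_cast by exact_mod_cast Nat.cast_le.2 this
    calc |q k| * ((e k : ℝ) * |z| ^ (e k - 1))
        ≤ C * ((2*(k:ℝ)+1) * r ^ (e k - 1)) := by
          apply mul_le_mul (hq k) _ (by positivity) hC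
          exact mul_le_mul h2 h1 (by positivity) (by positivity)
      _ ≤ (C / r) * ((2*(k:ℝ)+1) * r ^ k) := by
          rw [div_mul_eq_mul_div, le_div_iff₀ hr0]
          calc C * ((2*(k:ℝ)+1) * r ^ (e k - 1)) * r
              = C * ((2*(k:ℝ)+1) * (r ^ (e k - 1) * r)) := by ring
            _ ≤ C * ((2*(k:ℝ)+1) * r ^ k) := by
                apply mul_le_mul_of_nonneg_left _ hC
                apply mul_le_mul_of_nonneg_left (key k) (by positivity)
  have hsum0 : Summable (fun k => q k * (0:ℝ) ^ e k) := by
    apply summable_of_ne_finset_zero (s := {0})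
    intro k hk
    simp only [Finset.mem_singleton] at hk
    have : e k ≠ 0 := by have := he1 k; omega
    rw [zero_pow this, mul_zero]
  exact hasDerivAt_tsum_of_isPreconnected hu Metric.isOpen_ball
    (convex_ball (0:ℝ) r).isPreconnected
    (fun n z _ => (hasDerivAt_pow (e n) z).const_mul (q n))
    hbound (Metric.mem_ball_self hr0) hsum0
    (by rwa [mem_ball_zero_iff, Real.norm_eq_abs])

lemma summable_deriv_main {q : ℕ → ℝ} {C : ℝ} (hq : ∀ k, |q k| ≤ C)
    {e : ℕ → ℕ} (he1 : ∀ k, k ≤ e k - 1) (he2 : ∀ k, e k ≤ 2 * k + 1) {y : ℝ} (hy : |y| < 1) :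
    Summable (fun k => q k * ((e k : ℝ) * y ^ (e k - 1))) := by
  have hC : 0 ≤ C := le_trans (abs_nonneg _) (hq 0)
  have hS : Summable (fun k => (q k * (e k : ℝ)) * y ^ (e k - 1)) := by
    apply summable_main (C := C) _ he1 hy
    intro k
    rw [abs_mul, Nat.abs_cast]
    have h2 : ((e k : ℝ)) ≤ 2*(k:ℝ)+1 := by exact_mod_cast he2 k
    exact mul_le_mul (hq k) h2 (by positivity) hC
  exact hS.congr (fun k => by ring)

end Stmt5Aux
namespace Stmt5Aux

lemma abs_p (k : ℕ) : |p k| ≤ 1 := by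
  rw [abs_of_pos (p_pos k)]; exact p_le_one k

lemma kcast_nonneg (k : ℕ) : (0:ℝ) ≤ 2*(k:ℝ)+1 := by positivity

noncomputable def Bf (y : ℝ) : ℝ := ∑' k, p k * y ^ (2*k)
noncomputable def Af (y : ℝ) : ℝ := ∑' k, c k * y ^ (2*k+1)
noncomputable def Sf (y : ℝ) : ℝ := ∑' k, a k * y ^ (2*k)
noncomputable def DB (y : ℝ) : ℝ := ∑' k, p k * (((2*k:ℕ) : ℝ) * y ^ (2*k - 1))
noncomputable def DS (y : ℝ) : ℝ := ∑' k, a k * (((2*k:ℕ) : ℝ) * y ^ (2*k - 1))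
noncomputable def DA (y : ℝ) : ℝ := ∑' k, c k * (((2*k+1:ℕ) : ℝ) * y ^ (2*k+1 - 1))

section ode
variable {y : ℝ} (hy : |y| < 1)

include hy

lemma sumB : Summable (fun k => p k * y ^ (2*k)) :=
  summable_main (C := 1) (e := fun k => 2*k) (fun k => by
    have := abs_p k; have := kcast_nonneg k; nlinarith) (fun k => by show k ≤ 2*k; omega) hy

lemma sumS : Summable (fun k => a k * y ^ (2*k)) :=
  summable_main (C := 8) (e := fun k => 2*k) (fun k => by
    have := a_abs k; have := kcast_nonneg k; nlinarith) (fun k => by show k ≤ 2*k; omega) hy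

lemma sumA : Summable (fun k => c k * y ^ (2*k+1)) :=
  summable_main (C := 1) (e := fun k => 2*k+1) (fun k => by
    have := c_abs k; have := kcast_nonneg k; nlinarith) (fun k => by show k ≤ 2*k+1; omega) hy

lemma sumDB : Summable (fun k => p k * (((2*k:ℕ) : ℝ) * y ^ (2*k - 1))) :=
  summable_deriv_main (C := 1) abs_p (e := fun k => 2*k)
    (fun k => by show k ≤ 2*k-1; omega) (fun k => by show 2*k ≤ 2*k+1; omega) hy

lemma sumDS : Summable (fun k => a k * (((2*k:ℕ) : ℝ) * y ^ (2*k - 1))) :=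
  summable_deriv_main (C := 8) a_abs (e := fun k => 2*k)
    (fun k => by show k ≤ 2*k-1; omega) (fun k => by show 2*k ≤ 2*k+1; omega) hy

lemma hasDerivAt_Bf : HasDerivAt Bf (DB y) y :=
  hasDerivAt_main (q := p) (C := 1) abs_p (e := fun k => 2*k)
    (fun k => by show k ≤ 2*k; omega) (fun k => by show 2*k ≤ 2*k+1; omega) hy

lemma hasDerivAt_Sf : HasDerivAt Sf (DS y) y :=
  hasDerivAt_main (q := a) (C := 8) a_abs (e := fun k => 2*k)
    (fun k => by show k ≤ 2*k; omega) (fun k => by show 2*k ≤ 2*k+1; omega) hy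

lemma hasDerivAt_Af : HasDerivAt Af (DA y) y :=
  hasDerivAt_main (q := c) (C := 1) c_abs (e := fun k => 2*k+1)
    (fun k => by show k ≤ 2*k+1; omega) (fun k => by show 2*k+1 ≤ 2*k+1; omega) hy

omit hy in
lemma DA_eq_Bf : DA y = Bf y := by
  refine tsum_congr fun k => ?_
  have hexp : 2*k+1-1 = 2*k := by omega
  rw [hexp, c]
  have h1 : (2*(k:ℝ)+1) ≠ 0 := by positivity
  push_cast
  field_simp

lemma B_ode : (1 - y^2) * DB y - y * Bf y = 0 := by
  have s1 : Summable (fun k : ℕ => ((2*(k:ℝ)+1) * p k) * y^(2*k+1)) :=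
    summable_main (C := 1) (e := fun k => 2*k+1) (fun k => by
      rw [abs_mul, abs_of_nonneg (kcast_nonneg k)]
      have := abs_p k; have := kcast_nonneg k; nlinarith) (fun k => by show k ≤ 2*k+1; omega) hy
  have s2 : Summable (fun k : ℕ => p k * y^(2*k+1)) :=
    summable_main (C := 1) (e := fun k => 2*k+1) (fun k => by
      have := abs_p k; have := kcast_nonneg k; nlinarith) (fun k => by show k ≤ 2*k+1; omega) hy
  have s4 : Summable (fun k : ℕ => (2*(k:ℝ) * p k) * y^(2*k+1)) :=
    summable_main (C := 1) (e := fun k => 2*k+1) (fun k => by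
      have e1 : |2*(k:ℝ) * p k| = 2*(k:ℝ) * |p k| := by
        rw [abs_mul, abs_of_nonneg (by positivity : (0:ℝ) ≤ 2*(k:ℝ))]
      rw [e1]
      have := abs_p k; have := kcast_nonneg k
      have hk : (0:ℝ) ≤ (k:ℝ) := Nat.cast_nonneg k
      nlinarith) (fun k => by show k ≤ 2*k+1; omega) hy
  have e1 : DB y = ∑' k : ℕ, ((2*(k:ℝ)+1) * p k) * y^(2*k+1) := by
    rw [DB, Summable.tsum_eq_zero_add (sumDB hy)]
    have hz : p 0 * (((2*0:ℕ):ℝ) * y^(2*0-1)) = 0 := by norm_num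
    rw [hz, zero_add]
    refine tsum_congr fun k => ?_
    have hexp : 2*(k+1)-1 = 2*k+1 := by omega
    rw [hexp]
    push_cast
    linear_combination y^(2*k+1) * R1 k
  have e2 : y * Bf y = ∑' k : ℕ, p k * y^(2*k+1) := by
    rw [Bf, ← tsum_mul_left]; exact tsum_congr fun k => by ring
  have e3 : y^2 * DB y = ∑' k : ℕ, ((2*(k:ℝ)+1) * p k) * y^(2*k+3) := by
    rw [e1, ← tsum_mul_left]; exact tsum_congr fun k => by ring
  have e4 : DB y - y * Bf y = ∑' k : ℕ, (2*(k:ℝ) * p k) * y^(2*k+1) := by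
    rw [e1, e2, ← Summable.tsum_sub s1 s2]; exact tsum_congr fun k => by ring
  have e5 : ∑' k : ℕ, (2*(k:ℝ) * p k) * y^(2*k+1) = ∑' k : ℕ, ((2*(k:ℝ)+1) * p k) * y^(2*k+3) := by
    rw [Summable.tsum_eq_zero_add s4]
    have hz : (2*((0:ℕ):ℝ) * p 0) * y^(2*0+1) = 0 := by norm_num
    rw [hz, zero_add]
    refine tsum_congr fun k => ?_
    have hexp : 2*(k+1)+1 = 2*k+3 := by omega
    rw [hexp]
    push_cast
    linear_combination y^(2*k+3) * R1 k
  have efin : (1 - y^2) * DB y - y * Bf y = (DB y - y * Bf y) - y^2 * DB y := by ring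
  rw [efin, e4, e5, e3, sub_self]

lemma S_ode : (1 - y^2) * DS y - y * Sf y = 4 * Af y := by
  have hb1 : ∀ k : ℕ, |(2*(k:ℝ)+1) * a k + 4 * c k| ≤ 12 * (2*(k:ℝ)+1) := by
    intro k
    have h1 : |(2*(k:ℝ)+1) * a k + 4 * c k| ≤ |(2*(k:ℝ)+1) * a k| + |4 * c k| := abs_add_le _ _
    have e1 : |(2*(k:ℝ)+1) * a k| = (2*(k:ℝ)+1) * |a k| := by
      rw [abs_mul, abs_of_nonneg (kcast_nonneg k)]
    have e2 : |4 * c k| = 4 * |c k| := by rw [abs_mul]; norm_num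
    rw [e1, e2] at h1
    have := a_abs k; have := c_abs k; have := kcast_nonneg k
    nlinarith
  have hb4 : ∀ k : ℕ, |2*(k:ℝ) * a k + 4 * c k| ≤ 12 * (2*(k:ℝ)+1) := by
    intro k
    have h1 : |2*(k:ℝ) * a k + 4 * c k| ≤ |2*(k:ℝ) * a k| + |4 * c k| := abs_add_le _ _
    have e1 : |2*(k:ℝ) * a k| = 2*(k:ℝ) * |a k| := by
      rw [abs_mul, abs_of_nonneg (by positivity : (0:ℝ) ≤ 2*(k:ℝ))]
    have e2 : |4 * c k| = 4 * |c k| := by rw [abs_mul]; norm_num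
    rw [e1, e2] at h1
    have := a_abs k; have := c_abs k
    have hk : (0:ℝ) ≤ (k:ℝ) := Nat.cast_nonneg k
    nlinarith
  have s1 : Summable (fun k : ℕ => ((2*(k:ℝ)+1) * a k + 4 * c k) * y^(2*k+1)) :=
    summable_main (C := 12) (e := fun k => 2*k+1) hb1 (fun k => by show k ≤ 2*k+1; omega) hy
  have s2 : Summable (fun k : ℕ => a k * y^(2*k+1)) :=
    summable_main (C := 8) (e := fun k => 2*k+1) (fun k => by
      have := a_abs k; have := kcast_nonneg k; nlinarith) (fun k => by show k ≤ 2*k+1; omega) hy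
  have s3 : Summable (fun k : ℕ => (4 * c k) * y^(2*k+1)) :=
    summable_main (C := 4) (e := fun k => 2*k+1) (fun k => by
      have e2 : |4 * c k| = 4 * |c k| := by rw [abs_mul]; norm_num
      rw [e2]
      have := c_abs k; have := kcast_nonneg k; nlinarith) (fun k => by show k ≤ 2*k+1; omega) hy
  have s4 : Summable (fun k : ℕ => (2*(k:ℝ) * a k + 4 * c k) * y^(2*k+1)) :=
    summable_main (C := 12) (e := fun k => 2*k+1) hb4 (fun k => by show k ≤ 2*k+1; omega) hy
  have e1 : DS y = ∑' k : ℕ, ((2*(k:ℝ)+1) * a k + 4 * c k) * y^(2*k+1) := by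
    rw [DS, Summable.tsum_eq_zero_add (sumDS hy)]
    have hz : a 0 * (((2*0:ℕ):ℝ) * y^(2*0-1)) = 0 := by norm_num
    rw [hz, zero_add]
    refine tsum_congr fun k => ?_
    have hexp : 2*(k+1)-1 = 2*k+1 := by omega
    rw [hexp]
    push_cast
    linear_combination y^(2*k+1) * R2 k
  have e2 : y * Sf y = ∑' k : ℕ, a k * y^(2*k+1) := by
    rw [Sf, ← tsum_mul_left]; exact tsum_congr fun k => by ring
  have e3 : y^2 * DS y = ∑' k : ℕ, ((2*(k:ℝ)+1) * a k + 4 * c k) * y^(2*k+3) := by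
    rw [e1, ← tsum_mul_left]; exact tsum_congr fun k => by ring
  have e5 : 4 * Af y = ∑' k : ℕ, (4 * c k) * y^(2*k+1) := by
    rw [Af, ← tsum_mul_left]; exact tsum_congr fun k => by ring
  have e4 : DS y - y * Sf y = ∑' k : ℕ, (2*(k:ℝ) * a k + 4 * c k) * y^(2*k+1) := by
    rw [e1, e2, ← Summable.tsum_sub s1 s2]; exact tsum_congr fun k => by ring
  have e6 : DS y - y * Sf y - 4 * Af y = ∑' k : ℕ, (2*(k:ℝ) * a k) * y^(2*k+1) := by
    rw [e4, e5, ← Summable.tsum_sub s4 s3]; exact tsum_congr fun k => by ring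
  have s6 : Summable (fun k : ℕ => (2*(k:ℝ) * a k) * y^(2*k+1)) :=
    summable_main (C := 8) (e := fun k => 2*k+1) (fun k => by
      have e1 : |2*(k:ℝ) * a k| = 2*(k:ℝ) * |a k| := by
        rw [abs_mul, abs_of_nonneg (by positivity : (0:ℝ) ≤ 2*(k:ℝ))]
      rw [e1]
      have := a_abs k
      have hk : (0:ℝ) ≤ (k:ℝ) := Nat.cast_nonneg k
      nlinarith) (fun k => by show k ≤ 2*k+1; omega) hy
  have e7 : ∑' k : ℕ, (2*(k:ℝ) * a k) * y^(2*k+1)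
      = ∑' k : ℕ, ((2*(k:ℝ)+1) * a k + 4 * c k) * y^(2*k+3) := by
    rw [Summable.tsum_eq_zero_add s6]
    have hz : (2*((0:ℕ):ℝ) * a 0) * y^(2*0+1) = 0 := by norm_num
    rw [hz, zero_add]
    refine tsum_congr fun k => ?_
    have hexp : 2*(k+1)+1 = 2*k+3 := by omega
    rw [hexp]
    push_cast
    linear_combination y^(2*k+3) * R2 k
  have efin : (1 - y^2) * DS y - y * Sf y - 4 * Af y
      = (DS y - y * Sf y - 4 * Af y) - y^2 * DS y := by ring
  have : (1 - y^2) * DS y - y * Sf y - 4 * Af y = 0 := by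
    rw [efin, e6, e7, e3, sub_self]
  linarith

end ode

end Stmt5Aux
namespace Stmt5Aux

lemma one_sub_sq_pos {y : ℝ} (hy : |y| < 1) : 0 < 1 - y^2 := by
  have h := abs_lt.1 hy
  nlinarith [h.1, h.2]

lemma hasDerivAt_sqrt1 {y : ℝ} (hy : |y| < 1) :
    HasDerivAt (fun z : ℝ => √(1 - z^2)) (-y / √(1 - y^2)) y := by
  have h1 : (0:ℝ) < 1 - y^2 := one_sub_sq_pos hy
  have hd : HasDerivAt (fun z : ℝ => 1 - z^2) (-(2*y)) y := by
    simpa using (hasDerivAt_pow 2 y).const_sub 1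
  have h2 : (fun z : ℝ => 1 - z^2) y ≠ 0 := by simpa using h1.ne'
  have := hd.sqrt h2
  convert this using 1
  have h3 : √(1 - y^2) > 0 := Real.sqrt_pos.2 h1
  field_simp

lemma eq_on_Icc {f g d : ℝ → ℝ} {b : ℝ} (hb0 : 0 ≤ b) (h0 : f 0 = g 0)
    (hf : ∀ y ∈ Set.Icc (0:ℝ) b, HasDerivAt f (d y) y)
    (hg : ∀ y ∈ Set.Icc (0:ℝ) b, HasDerivAt g (d y) y) :
    f b = g b := by
  have key := constant_of_has_deriv_right_zero (f := fun z => f z - g z) (a := 0) (b := b)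
    (fun y hy => ((hf y hy).sub (hg y hy)).continuousAt.continuousWithinAt)
    (fun y hy => by
      have h := (hf y (Set.mem_Icc_of_Ico hy)).sub (hg y (Set.mem_Icc_of_Ico hy))
      rw [sub_self] at h
      exact h.hasDerivWithinAt)
  have hb : f b - g b = f 0 - g 0 := key b (Set.right_mem_Icc.2 hb0)
  linarith [hb, h0.le, h0.ge]

lemma abs_lt_one_of_Icc {b y : ℝ} (hb1 : b < 1) (hy : y ∈ Set.Icc (0:ℝ) b) : |y| < 1 := by
  rw [abs_lt]; constructor <;> [linarith [hy.1]; linarith [hy.2]]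

lemma Bf_mul_sqrt {b : ℝ} (hb0 : 0 ≤ b) (hb1 : b < 1) : Bf b * √(1 - b^2) = 1 := by
  have h0 : Bf 0 * √(1 - (0:ℝ)^2) = 1 := by
    have hB0 : Bf 0 = 1 := by
      rw [Bf, tsum_eq_single 0 (fun k hk => by
        rw [zero_pow (by omega : 2*k ≠ 0), mul_zero])]
      norm_num [p_zero]
    rw [hB0]; norm_num
  exact eq_on_Icc (d := fun _ => 0) hb0 h0
    (fun y hy => by
      have hy1 : |y| < 1 := abs_lt_one_of_Icc hb1 hy
      have h1 : (0:ℝ) < 1 - y^2 := one_sub_sq_pos hy1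
      have h2 : √(1 - y^2) > 0 := Real.sqrt_pos.2 h1
      have hsq : √(1 - y^2)^2 = 1 - y^2 := Real.sq_sqrt h1.le
      have hprod := (hasDerivAt_Bf hy1).mul (hasDerivAt_sqrt1 hy1)
      have hode := B_ode hy1
      have hm : √(1 - y^2) * √(1 - y^2) = 1 - y^2 := Real.mul_self_sqrt h1.le
      have hz : DB y * √(1 - y^2) + Bf y * (-y / √(1 - y^2)) = 0 := by
        field_simp
        linear_combination hode + DB y * hm
      rwa [hz] at hprod)
    (fun y hy => hasDerivAt_const y 1)

lemma Bf_eq {y : ℝ} (h0 : 0 ≤ y) (h1 : y < 1) : Bf y = 1 / √(1 - y^2) := by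
  have hp : (0:ℝ) < 1 - y^2 := by nlinarith
  have h2 : √(1 - y^2) > 0 := Real.sqrt_pos.2 hp
  rw [eq_div_iff h2.ne']
  exact Bf_mul_sqrt h0 h1

lemma Af_zero : Af 0 = 0 := by
  rw [Af]
  convert tsum_zero with k
  rw [zero_pow (by omega : 2*k+1 ≠ 0), mul_zero]

lemma Af_eq {b : ℝ} (h0 : 0 ≤ b) (h1 : b < 1) : Af b = Real.arcsin b := by
  refine eq_on_Icc (d := fun s => 1 / √(1 - s^2)) h0 (by rw [Af_zero, Real.arcsin_zero]) ?_ ?_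
  · intro y hy
    have hy1 : |y| < 1 := abs_lt_one_of_Icc h1 hy
    have hd := hasDerivAt_Af hy1
    rwa [DA_eq_Bf (y := y), Bf_eq hy.1 (lt_of_le_of_lt hy.2 h1)] at hd
  · intro y hy
    have hy1 : |y| < 1 := abs_lt_one_of_Icc h1 hy
    have h := abs_lt.1 hy1
    exact Real.hasDerivAt_arcsin (by linarith [h.1]) (by linarith [h.2])

lemma Sf_zero : Sf 0 = 0 := by
  rw [Sf, tsum_eq_single 0 (fun k hk => by
    rw [zero_pow (by omega : 2*k ≠ 0), mul_zero])]
  have : a 0 = 0 := by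
    simp [a, tt, p_zero, H2]
  simp [this]

lemma Sf_mul_sqrt {b : ℝ} (hb0 : 0 ≤ b) (hb1 : b < 1) :
    Sf b * √(1 - b^2) = 2 * Real.arcsin b ^ 2 := by
  have h0 : Sf 0 * √(1 - (0:ℝ)^2) = 2 * Real.arcsin 0 ^ 2 := by
    rw [Sf_zero, Real.arcsin_zero]; norm_num
  exact eq_on_Icc (d := fun s => 4 * Real.arcsin s / √(1 - s^2)) hb0 h0
    (fun y hy => by
      have hy1 : |y| < 1 := abs_lt_one_of_Icc hb1 hy
      have h1 : (0:ℝ) < 1 - y^2 := one_sub_sq_pos hy1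
      have h2 : √(1 - y^2) > 0 := Real.sqrt_pos.2 h1
      have hsq : √(1 - y^2)^2 = 1 - y^2 := Real.sq_sqrt h1.le
      have hprod := (hasDerivAt_Sf hy1).mul (hasDerivAt_sqrt1 hy1)
      have hode := S_ode hy1
      rw [Af_eq hy.1 (lt_of_le_of_lt hy.2 hb1)] at hode
      have hm : √(1 - y^2) * √(1 - y^2) = 1 - y^2 := Real.mul_self_sqrt h1.le
      have hz : DS y * √(1 - y^2) + Sf y * (-y / √(1 - y^2))
          = 4 * Real.arcsin y / √(1 - y^2) := by
        field_simp
        linear_combination hode + DS y * hm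
      rwa [hz] at hprod)
    (fun y hy => by
      have hy1 : |y| < 1 := abs_lt_one_of_Icc hb1 hy
      have h := abs_lt.1 hy1
      have ha := Real.hasDerivAt_arcsin (by linarith [h.1] : y ≠ -1) (by linarith [h.2] : y ≠ 1)
      have hd := (ha.pow 2).const_mul (2:ℝ)
      convert hd using 1
      have h2 : √(1 - y^2) > 0 := Real.sqrt_pos.2 (one_sub_sq_pos hy1)
      · rfl
      · rfl
      simp only [show (2:ℕ) - 1 = 1 from rfl, pow_one]
      ring)

end Stmt5Aux
theorem stmt5 (x : ℝ) (hx0 : 0 < x) (hx2 : x < 2) :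
    4 * (Real.arcsin (x / 2)) ^ 2 / Real.sqrt (4 - x ^ 2)
    = ∑' k : ℕ, (x / 2) ^ (2 * (k + 1)) * poch (1/2) (k+1) / poch 1 (k+1) *
        (4 * H2 (2 * (k + 1)) - H2 (k + 1)) := by
  set y := x / 2 with hy
  have hy0 : 0 ≤ y := by positivity
  have hy1 : y < 1 := by rw [hy]; linarith
  have habs : |y| < 1 := by rw [abs_of_nonneg hy0]; exact hy1
  have h1 : (0:ℝ) < 1 - y^2 := Stmt5Aux.one_sub_sq_pos habs
  have h2 : √(1 - y^2) > 0 := Real.sqrt_pos.2 h1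
  have hs := Stmt5Aux.Sf_mul_sqrt hy0 hy1
  have hsqrt4 : √(4 - x^2) = 2 * √(1 - y^2) := by
    have he : 4 - x^2 = 4 * (1 - y^2) := by rw [hy]; ring
    have h4 : √(4:ℝ) = 2 := by
      rw [show (4:ℝ) = 2^2 by norm_num, Real.sqrt_sq (by norm_num : (0:ℝ) ≤ 2)]
    rw [he, Real.sqrt_mul (by norm_num : (0:ℝ) ≤ 4), h4]
  have hLHS : 4 * Real.arcsin y ^ 2 / √(4 - x^2) = Stmt5Aux.Sf y := by
    rw [hsqrt4, div_eq_iff (by positivity)]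
    linear_combination -2 * hs
  rw [hLHS]
  have hsum := Stmt5Aux.sumS habs
  rw [Stmt5Aux.Sf, Summable.tsum_eq_zero_add hsum]
  have ha0 : Stmt5Aux.a 0 * y^(2*0) = 0 := by
    simp [Stmt5Aux.a, Stmt5Aux.tt, Stmt5Aux.p_zero, H2]
  rw [ha0, zero_add]
  refine tsum_congr fun k => ?_
  simp only [Stmt5Aux.a, Stmt5Aux.p, Stmt5Aux.tt]
  ring
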